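/- For every τ ∈ {0,1}^ℕ, every y ∈ Y_τ and every L ≥ 1, there exists i ∈ {0, 1, ..., 3^L − 1} such that y = S^i (φ_{τ_0} ∘ φ_{τ_1} ∘ ⋯ ∘ φ_{τ_{L−1}})(Δ^L y). -/

import Mathlib

open MeasureTheory Filter Topology
open scoped ENNReal

attribute [local instance] Classical.propDecidable

noncomputable section

/-- The shift map on bi-infinite sequences: `(S x) n = x (n+1)`. -/
def shift {α : Type*} (x : ℤ → α) : ℤ → α := fun n => x (n + 1)

/-- Shift by an arbitrary integer amount `m`. -/
def shiftZ {α : Type*} (m : ℤ) (x : ℤ → α) : ℤ → α := fun n => x (n + m)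

/-- A run structure on a bi-infinite sequence `x`: `t k` is the starting index of the
`k`-th maximal mono-symbol block of `x`, indexed so that block `0` contains position `0`. -/
structure RunStructure (x : ℤ → ℕ) where
  t : ℤ → ℤ
  mono : StrictMono t
  start_nonpos : t 0 ≤ 0
  start_pos : 0 < t 1
  const : ∀ k i : ℤ, t k ≤ i → i < t (k + 1) → x i = x (t k)
  alt : ∀ k : ℤ, x (t (k + 1)) ≠ x (t k)

/-- `d` is the run-length derivative of `x`: `d k` is the length of the `k`-th run. -/
def IsDelta (x d : ℤ → ℕ) : Prop :=
  ∃ r : RunStructure x, ∀ k : ℤ, (d k : ℤ) = r.t (k + 1) - r.t k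

/-- The run-length derivative operator `Δ` (junk value when no derivative exists). -/
def delta (x : ℤ → ℕ) : ℤ → ℕ :=
  if h : ∃ d, IsDelta x d then h.choose else fun _ => 0

/-- A bi-infinite sequence is smooth over `{1,3}` if all its iterated derivatives exist
and take values in `{1,3}`. -/
def SmoothSeq (x : ℤ → ℕ) : Prop :=
  ∀ k : ℕ, ∀ n : ℤ, delta^[k] x n = 1 ∨ delta^[k] x n = 3

/-- The set `X` of bi-infinite smooth sequences over `{1,3}`. -/
def SmoothX : Set (ℤ → ℕ) := {x | SmoothSeq x}

/-- The recoding alphabet: `A = 1`, `B = 3`, `C = 111`, `D = 333`. -/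
inductive ABCD : Type
  | A | B | C | D
deriving DecidableEq

instance : TopologicalSpace ABCD := ⊥
instance : DiscreteTopology ABCD := ⟨rfl⟩
instance : MeasurableSpace ABCD := ⊤

open ABCD

/-- The symbol (1 or 3) of the run encoded by a letter. -/
def sval : ABCD → ℕ
  | A => 1
  | B => 3
  | C => 1
  | D => 3

/-- The length (1 or 3) of the run encoded by a letter; this is also the value of `Δx`
at the corresponding position. -/
def lval : ABCD → ℕ
  | A => 1
  | B => 1
  | C => 3
  | D => 3

/-- `y` is the recoding of `x`: the letter `y k` encodes the `k`-th run of `x`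
(its symbol and its length). -/
def IsRecoding (x : ℤ → ℕ) (y : ℤ → ABCD) : Prop :=
  ∃ r : RunStructure x, ∀ k : ℤ,
    x (r.t k) = sval (y k) ∧ r.t (k + 1) - r.t k = (lval (y k) : ℤ)

/-- The recoding map `rec` (junk value when no recoding exists). -/
def recode (x : ℤ → ℕ) : ℤ → ABCD :=
  if h : ∃ y, IsRecoding x y then h.choose else fun _ => A

/-- The set `Y = rec(X)` of recodings of smooth sequences. -/
def SmoothY : Set (ℤ → ABCD) := recode '' SmoothX

/-- The derivative operator induced on recodings: since `(Δx) i = lval (rec x i)`,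
we have `Δ(rec x) = rec (Δ x) = recode (lval ∘ rec x)`. -/
def deltaY (y : ℤ → ABCD) : ℤ → ABCD := recode fun i => (lval (y i) : ℕ)

/-- `y` is well-aligned: the elementary block of `y` containing coordinate `0` starts
at position `0` (elementary blocks of `y` are exactly the runs of `Δx`, and
`(Δx) i = lval (y i)`). -/
def WellAligned (y : ℤ → ABCD) : Prop := lval (y (-1)) ≠ lval (y 0)

/-- `B_Y^L`: the set of `y ∈ Y` such that `y, Δy, ..., Δ^{L-1} y` are all well-aligned. -/
def BY (L : ℕ) : Set (ℤ → ABCD) :=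
  {y | y ∈ SmoothY ∧ ∀ l < L, WellAligned (deltaY^[l] y)}

/-- `Σ_y^L(n) = #{k ∈ [1,n] : S^k y ∈ B_Y^L}`. -/
def SigY (L : ℕ) (y : ℤ → ABCD) (n : ℕ) : ℕ :=
  ((Finset.Icc 1 n).filter fun k => shift^[k] y ∈ BY L).card

/-- `y` contains an elementary block in `{ABA, DCD}` (for `y ∈ Y`, any such factor is
automatically an elementary block). -/
def HasType0 (y : ℤ → ABCD) : Prop :=
  ∃ i : ℤ, (y i = A ∧ y (i + 1) = B ∧ y (i + 2) = A) ∨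
           (y i = D ∧ y (i + 1) = C ∧ y (i + 2) = D)

/-- `y` contains an elementary block in `{BAB, CDC}`. -/
def HasType1 (y : ℤ → ABCD) : Prop :=
  ∃ i : ℤ, (y i = B ∧ y (i + 1) = A ∧ y (i + 2) = B) ∨
           (y i = C ∧ y (i + 1) = D ∧ y (i + 2) = C)

/-- The type of a recoded sequence: `false` = type 0, `true` = type 1. -/
def typeOf (y : ℤ → ABCD) : Bool := decide (HasType1 y)

/-- The sequence of types of the successive derivatives of a smooth sequence `x`. -/
def TypesX (x : ℤ → ℕ) : ℕ → Bool := fun n => typeOf (recode (delta^[n] x))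

/-- The sequence of types of the successive derivatives of a recoded sequence `y`. -/
def TypesY (y : ℤ → ABCD) : ℕ → Bool := fun n => typeOf (deltaY^[n] y)

/-- `X_τ`: smooth bi-infinite sequences whose type sequence is exactly `τ`. -/
def Xset (τ : ℕ → Bool) : Set (ℤ → ℕ) := {x ∈ SmoothX | TypesX x = τ}

/-- `Y_τ = rec(X_τ)`. -/
def Yset (τ : ℕ → Bool) : Set (ℤ → ABCD) := recode '' Xset τ

/-- A sequence over `{A,B,C,D}` is alternating: no two consecutive symbols in `{A,C}`
and no two consecutive symbols in `{B,D}`. -/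
def Alternating (y : ℤ → ABCD) : Prop := ∀ n : ℤ, sval (y n) ≠ sval (y (n + 1))

/-- The substitutions `φ₀` and `φ₁` on letters. -/
def phiW : Bool → ABCD → List ABCD
  | false, A => [A]
  | false, B => [D]
  | false, C => [A, B, A]
  | false, D => [D, C, D]
  | true, A => [B]
  | true, B => [C]
  | true, C => [B, A, B]
  | true, D => [C, D, C]

/-- `z` is the image of the bi-infinite sequence `y` under the substitution `φ_t`, with
the convention that the image of the letter at position `0` starts at position `0`. -/
def IsSubst (t : Bool) (y z : ℤ → ABCD) : Prop :=
  ∃ u : ℤ → ℤ, u 0 = 0 ∧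
    (∀ k : ℤ, u (k + 1) = u k + (phiW t (y k)).length) ∧
    (∀ k : ℤ, ∀ j : Fin (phiW t (y k)).length, z (u k + (j : ℕ)) = (phiW t (y k)).get j)

/-- The substitution `φ_t` on bi-infinite sequences. -/
def substF (t : Bool) (y : ℤ → ABCD) : ℤ → ABCD :=
  if h : ∃ z, IsSubst t y z then h.choose else y

/-- The composition `φ_{τ₀} ∘ φ_{τ₁} ∘ ⋯ ∘ φ_{τ_{L-1}}`. -/
def substComp (τ : ℕ → Bool) : ℕ → (ℤ → ABCD) → (ℤ → ABCD)
  | 0 => id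
  | L + 1 => substF (τ 0) ∘ substComp (fun n => τ (n + 1)) L

/-- The homographies `h₀` and `h₁`. -/
def hmap : Bool → ℝ × ℝ → ℝ × ℝ
  | false, p => ((1 - p.1) / (3 - 2 * (p.1 + p.2)), (1 / 2 - p.1) / (3 - 2 * (p.1 + p.2)))
  | true, p => ((1 / 2 - p.1) / (3 - 2 * (p.1 + p.2)), (1 - p.1) / (3 - 2 * (p.1 + p.2)))

/-- The square `K = [0,1/2] × [0,1/2]`. -/
def Ksq : Set (ℝ × ℝ) := Set.Icc (0 : ℝ) (1 / 2) ×ˢ Set.Icc (0 : ℝ) (1 / 2)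

/-- The domain `E = {(a,b) ∈ K : a + b ≤ 3/4}`. -/
def Eset : Set (ℝ × ℝ) := {p ∈ Ksq | p.1 + p.2 ≤ 3 / 4}

/-- The composition `h_{t₀} ∘ h_{t₁} ∘ ⋯ ∘ h_{t_L}`. -/
def hComp (t : ℕ → Bool) : ℕ → (ℝ × ℝ → ℝ × ℝ)
  | 0 => hmap (t 0)
  | L + 1 => hComp t L ∘ hmap (t (L + 1))

/-- The point `(a(t), b(t))`, unique point of `⋂_L (h_{t₀} ∘ ⋯ ∘ h_{t_L})(E)`. -/
def abPoint (t : ℕ → Bool) : ℝ × ℝ :=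
  if h : ∃ p : ℝ × ℝ, (⋂ L : ℕ, hComp t L '' Eset) = {p} then h.choose else 0

/-- The number of occurrences of the letter `s` among positions `1, ..., m` of `z`. -/
def letterCount (s : ABCD) (z : ℤ → ABCD) (m : ℕ) : ℕ :=
  ((Finset.Icc 1 m).filter fun k => z (k : ℤ) = s).card

/-- `w` occurs as a factor of `y` at position `i`. -/
def IsFactorAt (w : List ABCD) (y : ℤ → ABCD) (i : ℤ) : Prop :=
  ∀ j : Fin w.length, y (i + (j : ℕ)) = w.get j

/-- The cylinder set `[w]` in `{1,3}^ℤ`. -/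
def cylX (w : List ℕ) : Set (ℤ → ℕ) :=
  {x | ∀ j : Fin w.length, x ((j : ℕ) : ℤ) = w.get j}

/-- The cylinder set `[w]` in `{A,B,C,D}^ℤ`. -/
def cylY (w : List ABCD) : Set (ℤ → ABCD) :=
  {y | ∀ j : Fin w.length, y ((j : ℕ) : ℤ) = w.get j}

/-- The number of occurrences of the finite word `w` in the prefix `x₀ ⋯ x_{n-1}`. -/
def occCount (x : ℤ → ℕ) (w : List ℕ) (n : ℕ) : ℕ :=
  ((Finset.range n).filter fun i =>
    i + w.length ≤ n ∧ ∀ j : Fin w.length, x (((i + (j : ℕ) : ℕ)) : ℤ) = w.get j).card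

/-- A subshift `Z` is minimal if it contains no nonempty proper closed shift-invariant
subset. -/
def ShiftMinimal {α : Type*} [TopologicalSpace α] (Z : Set (ℤ → α)) : Prop :=
  ∀ W : Set (ℤ → α), W ⊆ Z → W.Nonempty → IsClosed W → shift '' W = W → W = Z

namespace Stmt5Aux

lemma shift_iter {α : Type*} (x : ℤ → α) (m : ℕ) (n : ℤ) : shift^[m] x n = x (n + m) := by
  induction m generalizing n with
  | zero => simp
  | succ m ih =>
    rw [Function.iterate_succ_apply', shift, ih]
    congr 1
    push_cast
    ring

lemma cover (u : ℤ → ℤ) (hstep : ∀ k, u k + 1 ≤ u (k + 1)) (n : ℤ) :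
    ∃ k, u k ≤ n ∧ n < u (k + 1) := by
  have hadd : ∀ (m : ℕ) (k : ℤ), u k + m ≤ u (k + m) := by
    intro m
    induction m with
    | zero => simp
    | succ m ih =>
      intro k
      have h1 := ih k
      have h2 := hstep (k + m)
      have e : k + ((m : ℤ) + 1) = (k + m) + 1 := by ring
      push_cast
      rw [e]
      omega
  have hbdd : ∃ b : ℤ, ∀ m : ℤ, u m ≤ n → m ≤ b := by
    refine ⟨max 0 (n - u 0), fun m hm => ?_⟩
    rcases le_or_gt m 0 with h | h
    · omega
    · have := hadd m.toNat 0
      rw [Int.toNat_of_nonneg (le_of_lt h)] at this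
      simp at this
      omega
  have hinh : ∃ m : ℤ, u m ≤ n := by
    refine ⟨min 0 (n - u 0), ?_⟩
    set m : ℤ := min 0 (n - u 0) with hm
    have hm0 : m ≤ 0 := min_le_left _ _
    have := hadd (-m).toNat m
    rw [Int.toNat_of_nonneg (by omega)] at this
    simp at this
    omega
  obtain ⟨k, hk1, hk2⟩ := Int.exists_greatest_of_bdd hbdd hinh
  refine ⟨k, hk1, ?_⟩
  by_contra h
  have := hk2 (k + 1) (by omega)
  omega

section RunStruct

variable {x : ℤ → ℕ}

lemma rs_step (r : RunStructure x) (k : ℤ) : r.t k + 1 ≤ r.t (k + 1) := by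
  have := r.mono (lt_add_one k)
  omega

lemma rs_cover (r : RunStructure x) (n : ℤ) : ∃ k, r.t k ≤ n ∧ n < r.t (k + 1) :=
  cover r.t (rs_step r) n

lemma rs_isStart (r : RunStructure x) (k : ℤ) : x (r.t k) ≠ x (r.t k - 1) := by
  have h1 : r.t (k - 1) + 1 ≤ r.t (k - 1 + 1) := rs_step r (k - 1)
  have e : k - 1 + 1 = k := by ring
  rw [e] at h1
  have h2 := r.const (k - 1) (r.t k - 1) (by omega) (by rw [e]; omega)
  have h3 := r.alt (k - 1)
  rw [e] at h3
  rw [h2]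
  exact h3

lemma rs_not_start (r : RunStructure x) (k i : ℤ) (h1 : r.t k < i) (h2 : i < r.t (k + 1)) :
    x i = x (i - 1) := by
  rw [r.const k i (le_of_lt h1) h2, r.const k (i - 1) (by omega) (by omega)]

lemma rs_start_exists (r : RunStructure x) (i : ℤ) (h : x i ≠ x (i - 1)) :
    ∃ k, r.t k = i := by
  obtain ⟨k, hk1, hk2⟩ := rs_cover r i
  refine ⟨k, ?_⟩
  by_contra hne
  exact h (rs_not_start r k i (by omega) hk2)

lemma rs_unique (r r' : RunStructure x) : ∀ k, r.t k = r'.t k := by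
  have hsucc : ∀ k k' : ℤ, r.t k = r'.t k' → r.t (k + 1) = r'.t (k' + 1) := by
    intro k k' h
    obtain ⟨m, hm⟩ := rs_start_exists r' (r.t (k + 1)) (rs_isStart r (k + 1))
    have hmk : k' < m := by
      have h1 : r'.t k' < r'.t m := by
        have := rs_step r k
        omega
      exact r'.mono.lt_iff_lt.mp h1
    rcases eq_or_lt_of_le (by omega : k' + 1 ≤ m) with he | hlt
    · rw [he]
      exact hm.symm
    · exfalso
      have hlow : r.t k < r'.t (k' + 1) := by
        have := rs_step r' k'
        omega
      have hhigh : r'.t (k' + 1) < r.t (k + 1) := by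
        have := r'.mono hlt
        omega
      exact rs_isStart r' (k' + 1) (rs_not_start r k _ hlow hhigh)
  have hpred : ∀ k k' : ℤ, r.t k = r'.t k' → r.t (k - 1) = r'.t (k' - 1) := by
    intro k k' h
    obtain ⟨m, hm⟩ := rs_start_exists r' (r.t (k - 1)) (rs_isStart r (k - 1))
    have e : k - 1 + 1 = k := by ring
    have hstep1 : r.t (k - 1) + 1 ≤ r.t k := by
      have := rs_step r (k - 1)
      rw [e] at this
      exact this
    have hmk : m < k' := by
      have h1 : r'.t m < r'.t k' := by omega
      exact r'.mono.lt_iff_lt.mp h1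
    rcases eq_or_lt_of_le (by omega : m ≤ k' - 1) with he | hlt
    · rw [he] at hm
      rw [hm]
    · exfalso
      have hlow : r.t (k - 1) < r'.t (k' - 1) := by
        have := r'.mono hlt
        omega
      have hhigh : r'.t (k' - 1) < r.t (k - 1 + 1) := by
        rw [e]
        have he2 : k' - 1 + 1 = k' := by ring
        have := rs_step r' (k' - 1)
        rw [he2] at this
        omega
      exact rs_isStart r' (k' - 1) (rs_not_start r (k - 1) _ hlow hhigh)
  have hbase : r.t 0 = r'.t 0 := by
    obtain ⟨m, hm⟩ := rs_start_exists r' (r.t 0) (rs_isStart r 0)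
    rcases lt_trichotomy m 0 with hlt | he | hgt
    · exfalso
      have hlow : r.t 0 < r'.t 0 := by
        have := r'.mono hlt
        omega
      have hhigh : r'.t 0 < r.t (0 + 1) := by
        rw [show (0 : ℤ) + 1 = 1 from rfl]
        have h1 := r'.start_nonpos
        have h2 := r.start_pos
        omega
      exact rs_isStart r' 0 (rs_not_start r 0 _ hlow hhigh)
    · rw [he] at hm
      exact hm.symm
    · exfalso
      have h1 : r'.t 1 ≤ r'.t m := r'.mono.monotone (by omega)
      have h2 := r'.start_pos
      have h3 := r.start_nonpos
      omega
  intro k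
  induction k using Int.induction_on with
  | zero => exact hbase
  | succ k ih => exact hsucc k k ih
  | pred k ih => exact hpred (-(k : ℤ)) (-(k : ℤ)) ih

end RunStruct

section DeltaRecode

variable {x : ℤ → ℕ}

lemma exists_delta (hx : SmoothSeq x) : ∃ d, IsDelta x d := by
  by_contra h
  have h1 := hx 1 0
  rw [Function.iterate_one] at h1
  rw [delta, dif_neg h] at h1
  simp at h1

lemma isDelta_delta (hx : SmoothSeq x) : IsDelta x (delta x) := by
  have h := exists_delta hx
  rw [delta, dif_pos h]
  exact h.choose_spec

lemma smooth_delta (hx : SmoothSeq x) : SmoothSeq (delta x) := fun k n => by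
  have := hx (k + 1) n
  rwa [Function.iterate_succ_apply] at this

lemma smooth_vals (hx : SmoothSeq x) (n : ℤ) : x n = 1 ∨ x n = 3 := by
  have := hx 0 n
  simpa using this

lemma delta_vals (hx : SmoothSeq x) (n : ℤ) : delta x n = 1 ∨ delta x n = 3 := by
  have := hx 1 n
  rwa [Function.iterate_one] at this

lemma letter_ext : ∀ a b : ABCD, sval a = sval b → lval a = lval b → a = b := by
  intro a b
  cases a <;> cases b <;> simp [sval, lval]
lemma sval_mem : ∀ a : ABCD, sval a = 1 ∨ sval a = 3 := by
  intro a
  cases a <;> simp [sval]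
lemma lval_mem : ∀ a : ABCD, lval a = 1 ∨ lval a = 3 := by
  intro a
  cases a <;> simp [lval]
lemma phiW_len : ∀ (t : Bool) (a : ABCD), (phiW t a).length = lval a := by
  intro t a
  cases t <;> cases a <;> rfl
lemma phiW_len_pos : ∀ (t : Bool) (a : ABCD), 1 ≤ (phiW t a).length := by
  intro t a
  cases t <;> cases a <;> simp [phiW]
lemma phiW_len_le : ∀ (t : Bool) (a : ABCD), (phiW t a).length ≤ 3 := by
  intro t a
  cases t <;> cases a <;> simp [phiW]
lemma letterA : ∀ a : ABCD, sval a = 1 → lval a = 1 → a = A := by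
  intro a
  cases a <;> simp [sval, lval]
lemma letterB : ∀ a : ABCD, sval a = 3 → lval a = 1 → a = B := by
  intro a
  cases a <;> simp [sval, lval]
lemma letterC : ∀ a : ABCD, sval a = 1 → lval a = 3 → a = C := by
  intro a
  cases a <;> simp [sval, lval]
lemma letterD : ∀ a : ABCD, sval a = 3 → lval a = 3 → a = D := by
  intro a
  cases a <;> simp [sval, lval]

lemma exists_recode (hx : SmoothSeq x) : ∃ y, IsRecoding x y := by
  obtain ⟨r, hr⟩ := isDelta_delta hx
  refine ⟨fun k => if x (r.t k) = 1 then (if delta x k = 1 then A else C)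
                   else (if delta x k = 1 then B else D), r, fun k => ?_⟩
  have hv := smooth_vals hx (r.t k)
  have hd := delta_vals hx k
  have hrk := hr k
  rcases hv with h1 | h1 <;> rcases hd with h2 | h2 <;>
    rw [h2] at hrk <;> push_cast at hrk <;>
    simp [h1, h2, sval, lval] <;> omega

lemma isRecoding_recode (hx : SmoothSeq x) : IsRecoding x (recode x) := by
  have h := exists_recode hx
  rw [recode, dif_pos h]
  exact h.choose_spec

lemma lval_recode (hx : SmoothSeq x) (k : ℤ) : lval (recode x k) = delta x k := by
  obtain ⟨r1, h1⟩ := isRecoding_recode hx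
  obtain ⟨r0, h0⟩ := isDelta_delta hx
  have ht := rs_unique r0 r1
  have e1 := (h1 k).2
  have e0 := h0 k
  rw [ht, ht] at e0
  omega

lemma deltaY_recode (hx : SmoothSeq x) : deltaY (recode x) = recode (delta x) := by
  have h : (fun i : ℤ => lval (recode x i)) = delta x := funext fun i => lval_recode hx i
  show recode (fun i => lval (recode x i)) = recode (delta x)
  rw [h]

end DeltaRecode

section Subst

lemma isSubst_unique {t : Bool} {w z1 z2 : ℤ → ABCD}
    (h1 : IsSubst t w z1) (h2 : IsSubst t w z2) : z1 = z2 := by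
  obtain ⟨u1, hu10, hu1s, hz1⟩ := h1
  obtain ⟨u2, hu20, hu2s, hz2⟩ := h2
  have huu : ∀ k, u1 k = u2 k := by
    intro k
    induction k using Int.induction_on with
    | zero => rw [hu10, hu20]
    | succ k ih => rw [hu1s, hu2s, ih]
    | pred k ih =>
      have e1 := hu1s (-(k : ℤ) - 1)
      have e2 := hu2s (-(k : ℤ) - 1)
      rw [show -(k : ℤ) - 1 + 1 = -(k : ℤ) from by ring] at e1 e2
      omega
  have hstep : ∀ k, u1 k + 1 ≤ u1 (k + 1) := by
    intro k
    have h := hu1s k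
    have hp := phiW_len_pos t (w k)
    omega
  funext n
  obtain ⟨k, hk1, hk2⟩ := cover u1 hstep n
  have hlen := hu1s k
  set j : ℕ := (n - u1 k).toNat with hj
  have hjz : (j : ℤ) = n - u1 k := Int.toNat_of_nonneg (by omega)
  have hjlt : j < (phiW t (w k)).length := by omega
  have hz1' := hz1 k ⟨j, hjlt⟩
  have hz2' := hz2 k ⟨j, hjlt⟩
  rw [← huu k] at hz2'
  have en : u1 k + ((⟨j, hjlt⟩ : Fin (phiW t (w k)).length) : ℕ) = n := by
    show u1 k + (j : ℤ) = n
    omega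
  rw [en] at hz1' hz2'
  rw [hz1', hz2']

lemma substF_eq {t : Bool} {w z : ℤ → ABCD} (h : IsSubst t w z) : substF t w = z := by
  have hex : ∃ z', IsSubst t w z' := ⟨z, h⟩
  rw [substF, dif_pos hex]
  exact isSubst_unique hex.choose_spec h

lemma isSubst_shiftZ {t : Bool} {w z : ℤ → ABCD} {u : ℤ → ℤ}
    (hus : ∀ k, u (k + 1) = u k + ((phiW t (w k)).length : ℤ))
    (hz : ∀ (k : ℤ) (j : Fin (phiW t (w k)).length), z (u k + (j : ℕ)) = (phiW t (w k)).get j)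
    (j : ℤ) : IsSubst t (fun n => w (n + j)) (fun n => z (n + u j)) := by
  refine ⟨fun k => u (k + j) - u j, by show u (0 + j) - u j = 0; rw [zero_add, sub_self],
    fun k => ?_, fun k jj => ?_⟩
  · show u (k + 1 + j) - u j = u (k + j) - u j + ((phiW t (w (k + j))).length : ℤ)
    have h := hus (k + j)
    rw [show k + 1 + j = k + j + 1 from by ring]
    omega
  · show z (u (k + j) - u j + (jj : ℕ) + u j) = (phiW t (w (k + j))).get jj
    rw [show u (k + j) - u j + ((jj : ℕ) : ℤ) + u j = u (k + j) + ((jj : ℕ) : ℤ) from by ring]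
    exact hz (k + j) jj

lemma u_neg_bounds {t : Bool} {w : ℤ → ABCD} {u : ℤ → ℤ}
    (hu0 : u 0 = 0) (hus : ∀ k, u (k + 1) = u k + ((phiW t (w k)).length : ℤ)) :
    ∀ j : ℕ, -(3 * (j : ℤ)) ≤ u (-(j : ℤ)) ∧ u (-(j : ℤ)) ≤ -(j : ℤ) := by
  intro j
  induction j with
  | zero => simp [hu0]
  | succ j ih =>
    have e := hus (-(j : ℤ) - 1)
    rw [show -(j : ℤ) - 1 + 1 = -(j : ℤ) from by ring] at e
    have h1 := phiW_len_pos t (w (-(j : ℤ) - 1))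
    have h2 := phiW_len_le t (w (-(j : ℤ) - 1))
    push_cast
    rw [show -((j : ℤ) + 1) = -(j : ℤ) - 1 from by ring]
    omega

end Subst


lemma main1 {x : ℤ → ℕ} (hx : SmoothSeq x) :
    ∃ (zz : ℤ → ABCD) (u : ℤ → ℤ) (i : ℕ), i < 3 ∧
      u 0 = 0 ∧
      (∀ k, u (k + 1) = u k + ((phiW (typeOf (recode x)) (deltaY (recode x) k)).length : ℤ)) ∧
      (∀ (k : ℤ) (j : Fin (phiW (typeOf (recode x)) (deltaY (recode x) k)).length),
        zz (u k + (j : ℕ)) = (phiW (typeOf (recode x)) (deltaY (recode x) k)).get j) ∧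
      recode x = shift^[i] zz := by
  obtain ⟨r, hr⟩ := isRecoding_recode hx
  set y : ℤ → ABCD := recode x with hy
  set z : ℤ → ℕ := fun i => (lval (y i) : ℕ) with hzdef
  have hzx : z = delta x := funext fun i => lval_recode hx i
  have hzs : SmoothSeq z := by rw [hzx]; exact smooth_delta hx
  have hwdef : deltaY y = recode z := rfl
  obtain ⟨r', hr'⟩ := isDelta_delta hzs
  obtain ⟨r2, hr2⟩ := isRecoding_recode hzs
  have ht2 : ∀ k, r2.t k = r'.t k := rs_unique r2 r'
  set w : ℤ → ABCD := recode z with hwz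
  have hd13 : ∀ k, delta z k = 1 ∨ delta z k = 3 := fun k => delta_vals hzs k
  have hblk : ∀ k, r'.t (k + 1) = r'.t k + (delta z k : ℤ) := fun k => by
    have := hr' k; omega
  have svalw : ∀ k, sval (w k) = lval (y (r'.t k)) := by
    intro k
    have h1 := (hr2 k).1
    rw [ht2 k] at h1
    exact h1.symm
  have lvalw : ∀ k, (lval (w k) : ℤ) = (delta z k : ℤ) := by
    intro k
    have h1 := (hr2 k).2
    rw [ht2 k, ht2 (k + 1)] at h1
    have h2 := hr' k
    omega
  have hsalt : ∀ n, sval (y (n + 1)) ≠ sval (y n) := by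
    intro n
    rw [← (hr n).1, ← (hr (n + 1)).1]
    exact r.alt n
  have hs2 : ∀ n, sval (y (n + 2)) = sval (y n) := by
    intro n
    have h1 := hsalt n
    have h2 := hsalt (n + 1)
    rw [show n + 1 + 1 = n + 2 from by ring] at h2
    rcases sval_mem (y n) with e1 | e1 <;> rcases sval_mem (y (n + 1)) with e2 | e2 <;>
      rcases sval_mem (y (n + 2)) with e3 | e3 <;> omega
  have hs3 : ∀ n, sval (y (n + 3)) ≠ sval (y n) := by
    intro n
    have h1 := hs2 (n + 1)
    rw [show n + 1 + 2 = n + 3 from by ring] at h1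
    rw [h1]
    exact hsalt n
  have hblkc : ∀ k i, r'.t k ≤ i → i < r'.t (k + 1) → lval (y i) = lval (y (r'.t k)) :=
    fun k i h1 h2 => r'.const k i h1 h2
  have hblka : ∀ k, lval (y (r'.t (k + 1))) ≠ lval (y (r'.t k)) := fun k => r'.alt k
  have hQsucc : ∀ k, (sval (y (r'.t (k + 1))) = lval (y (r'.t (k + 1)))) ↔
      (sval (y (r'.t k)) = lval (y (r'.t k))) := by
    intro k
    have hs : sval (y (r'.t (k + 1))) ≠ sval (y (r'.t k)) := by
      rcases hd13 k with h | h <;> rw [hblk k, h] <;> push_cast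
      · exact hsalt (r'.t k)
      · exact hs3 (r'.t k)
    have hl := hblka k
    rcases sval_mem (y (r'.t (k + 1))) with a1 | a1 <;>
      rcases sval_mem (y (r'.t k)) with a2 | a2 <;>
      rcases lval_mem (y (r'.t (k + 1))) with b1 | b1 <;>
      rcases lval_mem (y (r'.t k)) with b2 | b2 <;>
      constructor <;> intro hq <;> omega
  have hQall : ∀ k, (sval (y (r'.t k)) = lval (y (r'.t k))) ↔
      (sval (y (r'.t 0)) = lval (y (r'.t 0))) := by
    intro k
    induction k using Int.induction_on with
    | zero => exact Iff.rfl
    | succ k ih => exact (hQsucc k).trans ih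
    | pred k ih =>
      have h := hQsucc (-(k : ℤ) - 1)
      rw [show -(k : ℤ) - 1 + 1 = -(k : ℤ) from by ring] at h
      exact h.symm.trans ih
  have h3blk : ∀ i : ℤ, lval (y (i + 1)) = lval (y i) → lval (y (i + 2)) = lval (y i) →
      ∃ k, r'.t k = i ∧ delta z k = 3 := by
    intro i e1 e2
    obtain ⟨k, hk1, hk2⟩ := rs_cover r' i
    have hbi := hblkc k i hk1 hk2
    have hb1 : i + 1 < r'.t (k + 1) := by
      by_contra hcon
      have he : r'.t (k + 1) = i + 1 := by omega
      have hh := hblka k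
      rw [he] at hh
      exact hh (by rw [e1, hbi])
    have hb2 : i + 2 < r'.t (k + 1) := by
      by_contra hcon
      have he : r'.t (k + 1) = i + 2 := by omega
      have hh := hblka k
      rw [he] at hh
      exact hh (by rw [e2, hbi])
    have hb := hblk k
    rcases hd13 k with hdk | hdk <;> rw [hdk] at hb <;> push_cast at hb
    · omega
    · exact ⟨k, by omega, hdk⟩
  have hex3 : ∃ k, delta z k = 3 := by
    by_contra hcon
    push_neg at hcon
    have h1 : ∀ k, delta z k = 1 := by
      intro k
      rcases hd13 k with h | h
      · exact h
      · exact absurd h (hcon k)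
    have hnd : ¬ ∃ dd, IsDelta (delta z) dd := by
      rintro ⟨dd, r3, -⟩
      have halt := r3.alt 0
      rw [h1, h1] at halt
      exact halt rfl
    have h2 := hzs 2 0
    rw [show (2 : ℕ) = 1 + 1 from rfl, Function.iterate_succ_apply',
      Function.iterate_one] at h2
    rw [delta, dif_neg hnd] at h2
    simp at h2
  set p : Prop := (sval (y (r'.t 0)) = lval (y (r'.t 0))) with hpdef
  have htype1 : HasType1 y ↔ ¬ p := by
    constructor
    · rintro ⟨i, hB | hC⟩
      · obtain ⟨k, hk, hdk⟩ := h3blk i (by simp [hB.1, hB.2.1, lval]) (by simp [hB.1, hB.2.2, lval])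
        intro hpp
        have hq := (hQall k).2 hpp
        rw [hk, hB.1] at hq
        simp [sval, lval] at hq
      · obtain ⟨k, hk, hdk⟩ := h3blk i (by simp [hC.1, hC.2.1, lval]) (by simp [hC.1, hC.2.2, lval])
        intro hpp
        have hq := (hQall k).2 hpp
        rw [hk, hC.1] at hq
        simp [sval, lval] at hq
    · intro hpp
      obtain ⟨k, hdk⟩ := hex3
      have hQk : ¬ (sval (y (r'.t k)) = lval (y (r'.t k))) := fun h => hpp ((hQall k).1 h)
      have hlen : r'.t (k + 1) = r'.t k + 3 := by rw [hblk k, hdk]; push_cast; ring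
      have l1 : lval (y (r'.t k + 1)) = lval (y (r'.t k)) :=
        hblkc k (r'.t k + 1) (by omega) (by omega)
      have l2 : lval (y (r'.t k + 2)) = lval (y (r'.t k)) :=
        hblkc k (r'.t k + 2) (by omega) (by omega)
      have s1 := hsalt (r'.t k)
      have s2 := hs2 (r'.t k)
      rcases lval_mem (y (r'.t k)) with hl | hl
      · have hsv : sval (y (r'.t k)) = 3 := by
          rcases sval_mem (y (r'.t k)) with h | h
          · exact absurd (by rw [h, hl]) hQk
          · exact h
        have hyi : y (r'.t k) = B := letterB _ hsv hl
        have hy1 : y (r'.t k + 1) = A := by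
          refine letterA _ ?_ (by rw [l1, hl])
          rcases sval_mem (y (r'.t k + 1)) with h | h
          · exact h
          · exact absurd (by rw [h, hsv]) s1
        have hy2 : y (r'.t k + 2) = B := by
          refine letterB _ ?_ (by rw [l2, hl])
          rw [s2, hsv]
        exact ⟨r'.t k, Or.inl ⟨hyi, hy1, hy2⟩⟩
      · have hsv : sval (y (r'.t k)) = 1 := by
          rcases sval_mem (y (r'.t k)) with h | h
          · exact h
          · exact absurd (by rw [h, hl]) hQk
        have hyi : y (r'.t k) = C := letterC _ hsv hl
        have hy1 : y (r'.t k + 1) = D := by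
          refine letterD _ ?_ (by rw [l1, hl])
          rcases sval_mem (y (r'.t k + 1)) with h | h
          · exact absurd (by rw [h, hsv]) s1
          · exact h
        have hy2 : y (r'.t k + 2) = C := by
          refine letterC _ ?_ (by rw [l2, hl])
          rw [s2, hsv]
        exact ⟨r'.t k, Or.inr ⟨hyi, hy1, hy2⟩⟩
  have htyp : typeOf y = true ↔ ¬ p := by
    rw [typeOf, decide_eq_true_eq]
    exact htype1
  have hQ : ∀ k, (typeOf y = false → sval (y (r'.t k)) = lval (y (r'.t k))) ∧
      (typeOf y = true → sval (y (r'.t k)) ≠ lval (y (r'.t k))) := by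
    intro k
    constructor
    · intro ht
      refine (hQall k).2 ?_
      by_contra hnp
      rw [htyp.2 hnp] at ht
      simp at ht
    · intro ht hq
      exact (htyp.1 ht) ((hQall k).1 hq)
  -- the key letter computation
  have get_eq_getD : ∀ (l : List ABCD) (j : Fin l.length), l.get j = l.getD (j : ℕ) A := by
    intro l j
    rw [List.getD_eq_getElem l A j.isLt]
    simp [List.get_eq_getElem]
  have letterAt : ∀ (k : ℤ) (jv : ℕ), jv < (phiW (typeOf y) (w k)).length →
      y (r'.t k + (jv : ℤ)) = (phiW (typeOf y) (w k)).getD jv A := by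
    intro k jv hjv
    have hsw := svalw k
    have hlw := lvalw k
    have hbk := hblk k
    have hQf := (hQ k).1
    have hQt := (hQ k).2
    have hsv13 := sval_mem (y (r'.t k))
    have hsv13' := sval_mem (y (r'.t k + 1))
    have s1 := hsalt (r'.t k)
    have s2 := hs2 (r'.t k)
    rcases htv : typeOf y with _ | _ <;> rw [htv] at hjv <;>
      rcases hwk : w k with _ | _ | _ | _ <;> rw [hwk] at hjv hsw hlw <;>
      simp only [phiW, List.length_cons, List.length_nil] at hjv
    · have hlv : lval (y (r'.t k)) = 1 := by rw [← hsw]; exact rfl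
      have hj0 : jv = 0 := by omega
      subst hj0
      have hs0 : sval (y (r'.t k)) = 1 := by rw [hQf htv, hlv]
      rw [show r'.t k + ((0 : ℕ) : ℤ) = r'.t k from by push_cast; ring]
      exact (letterA _ hs0 hlv).trans (by rfl)
    · have hlv : lval (y (r'.t k)) = 3 := by rw [← hsw]; exact rfl
      have hj0 : jv = 0 := by omega
      subst hj0
      have hs0 : sval (y (r'.t k)) = 3 := by rw [hQf htv, hlv]
      rw [show r'.t k + ((0 : ℕ) : ℤ) = r'.t k from by push_cast; ring]
      exact (letterD _ hs0 hlv).trans (by rfl)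
    · have hdz : (delta z k : ℤ) = 3 := by rw [← hlw]; exact rfl
      have hlen : r'.t (k + 1) = r'.t k + 3 := by omega
      have l0 : lval (y (r'.t k)) = 1 := by rw [← hsw]; exact rfl
      have l1 : lval (y (r'.t k + 1)) = 1 := by
        rw [hblkc k (r'.t k + 1) (by omega) (by omega)]; exact l0
      have l2 : lval (y (r'.t k + 2)) = 1 := by
        rw [hblkc k (r'.t k + 2) (by omega) (by omega)]; exact l0
      have hs0 : sval (y (r'.t k)) = 1 := by rw [hQf htv, l0]
      have hs1 : sval (y (r'.t k + 1)) = 3 := by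
        rcases hsv13' with h | h
        · exact absurd (by rw [h, hs0]) s1
        · exact h
      have hs2' : sval (y (r'.t k + 2)) = 1 := by rw [s2, hs0]
      interval_cases jv
      · rw [show r'.t k + ((0 : ℕ) : ℤ) = r'.t k from by push_cast; ring]
        exact (letterA _ hs0 l0).trans (by rfl)
      · rw [show r'.t k + ((1 : ℕ) : ℤ) = r'.t k + 1 from by push_cast; ring]
        exact (letterB _ hs1 l1).trans (by rfl)
      · rw [show r'.t k + ((2 : ℕ) : ℤ) = r'.t k + 2 from by push_cast; ring]
        exact (letterA _ hs2' l2).trans (by rfl)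
    · have hdz : (delta z k : ℤ) = 3 := by rw [← hlw]; exact rfl
      have hlen : r'.t (k + 1) = r'.t k + 3 := by omega
      have l0 : lval (y (r'.t k)) = 3 := by rw [← hsw]; exact rfl
      have l1 : lval (y (r'.t k + 1)) = 3 := by
        rw [hblkc k (r'.t k + 1) (by omega) (by omega)]; exact l0
      have l2 : lval (y (r'.t k + 2)) = 3 := by
        rw [hblkc k (r'.t k + 2) (by omega) (by omega)]; exact l0
      have hs0 : sval (y (r'.t k)) = 3 := by rw [hQf htv, l0]
      have hs1 : sval (y (r'.t k + 1)) = 1 := by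
        rcases hsv13' with h | h
        · exact h
        · exact absurd (by rw [h, hs0]) s1
      have hs2' : sval (y (r'.t k + 2)) = 3 := by rw [s2, hs0]
      interval_cases jv
      · rw [show r'.t k + ((0 : ℕ) : ℤ) = r'.t k from by push_cast; ring]
        exact (letterD _ hs0 l0).trans (by rfl)
      · rw [show r'.t k + ((1 : ℕ) : ℤ) = r'.t k + 1 from by push_cast; ring]
        exact (letterC _ hs1 l1).trans (by rfl)
      · rw [show r'.t k + ((2 : ℕ) : ℤ) = r'.t k + 2 from by push_cast; ring]
        exact (letterD _ hs2' l2).trans (by rfl)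
    · have hlv : lval (y (r'.t k)) = 1 := by rw [← hsw]; exact rfl
      have hj0 : jv = 0 := by omega
      subst hj0
      have hs0 : sval (y (r'.t k)) = 3 := by
        have hne := hQt htv
        rw [hlv] at hne
        rcases hsv13 with h | h
        · exact absurd h hne
        · exact h
      rw [show r'.t k + ((0 : ℕ) : ℤ) = r'.t k from by push_cast; ring]
      exact (letterB _ hs0 hlv).trans (by rfl)
    · have hlv : lval (y (r'.t k)) = 3 := by rw [← hsw]; exact rfl
      have hj0 : jv = 0 := by omega
      subst hj0
      have hs0 : sval (y (r'.t k)) = 1 := by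
        have hne := hQt htv
        rw [hlv] at hne
        rcases hsv13 with h | h
        · exact h
        · exact absurd h hne
      rw [show r'.t k + ((0 : ℕ) : ℤ) = r'.t k from by push_cast; ring]
      exact (letterC _ hs0 hlv).trans (by rfl)
    · have hdz : (delta z k : ℤ) = 3 := by rw [← hlw]; exact rfl
      have hlen : r'.t (k + 1) = r'.t k + 3 := by omega
      have l0 : lval (y (r'.t k)) = 1 := by rw [← hsw]; exact rfl
      have l1 : lval (y (r'.t k + 1)) = 1 := by
        rw [hblkc k (r'.t k + 1) (by omega) (by omega)]; exact l0
      have l2 : lval (y (r'.t k + 2)) = 1 := by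
        rw [hblkc k (r'.t k + 2) (by omega) (by omega)]; exact l0
      have hs0 : sval (y (r'.t k)) = 3 := by
        have hne := hQt htv
        rw [l0] at hne
        rcases hsv13 with h | h
        · exact absurd h hne
        · exact h
      have hs1 : sval (y (r'.t k + 1)) = 1 := by
        rcases hsv13' with h | h
        · exact h
        · exact absurd (by rw [h, hs0]) s1
      have hs2' : sval (y (r'.t k + 2)) = 3 := by rw [s2, hs0]
      interval_cases jv
      · rw [show r'.t k + ((0 : ℕ) : ℤ) = r'.t k from by push_cast; ring]
        exact (letterB _ hs0 l0).trans (by rfl)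
      · rw [show r'.t k + ((1 : ℕ) : ℤ) = r'.t k + 1 from by push_cast; ring]
        exact (letterA _ hs1 l1).trans (by rfl)
      · rw [show r'.t k + ((2 : ℕ) : ℤ) = r'.t k + 2 from by push_cast; ring]
        exact (letterB _ hs2' l2).trans (by rfl)
    · have hdz : (delta z k : ℤ) = 3 := by rw [← hlw]; exact rfl
      have hlen : r'.t (k + 1) = r'.t k + 3 := by omega
      have l0 : lval (y (r'.t k)) = 3 := by rw [← hsw]; exact rfl
      have l1 : lval (y (r'.t k + 1)) = 3 := by
        rw [hblkc k (r'.t k + 1) (by omega) (by omega)]; exact l0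
      have l2 : lval (y (r'.t k + 2)) = 3 := by
        rw [hblkc k (r'.t k + 2) (by omega) (by omega)]; exact l0
      have hs0 : sval (y (r'.t k)) = 1 := by
        have hne := hQt htv
        rw [l0] at hne
        rcases hsv13 with h | h
        · exact h
        · exact absurd h hne
      have hs1 : sval (y (r'.t k + 1)) = 3 := by
        rcases hsv13' with h | h
        · exact absurd (by rw [h, hs0]) s1
        · exact h
      have hs2' : sval (y (r'.t k + 2)) = 1 := by rw [s2, hs0]
      interval_cases jv
      · rw [show r'.t k + ((0 : ℕ) : ℤ) = r'.t k from by push_cast; ring]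
        exact (letterC _ hs0 l0).trans (by rfl)
      · rw [show r'.t k + ((1 : ℕ) : ℤ) = r'.t k + 1 from by push_cast; ring]
        exact (letterD _ hs1 l1).trans (by rfl)
      · rw [show r'.t k + ((2 : ℕ) : ℤ) = r'.t k + 2 from by push_cast; ring]
        exact (letterC _ hs2' l2).trans (by rfl)
  -- assemble the witness
  have ht0 := r'.start_nonpos
  have ht1 := r'.start_pos
  have hblk0 := hblk 0
  set i0 : ℕ := (-(r'.t 0)).toNat with hi0
  have hi0z : (i0 : ℤ) = -(r'.t 0) := Int.toNat_of_nonneg (by omega)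
  have hi0lt : i0 < 3 := by
    rcases hd13 0 with h | h <;> rw [h] at hblk0 <;> push_cast at hblk0 <;> omega
  refine ⟨fun n => y (n + r'.t 0), fun k => r'.t k - r'.t 0, i0, hi0lt,
    by show r'.t 0 - r'.t 0 = 0; ring, ?_, ?_, ?_⟩
  · intro k
    show r'.t (k + 1) - r'.t 0 = r'.t k - r'.t 0 + ((phiW (typeOf y) (w k)).length : ℤ)
    rw [phiW_len]
    have h1 := lvalw k
    have h2 := hblk k
    omega
  · intro k j
    have hjlt : (j : ℕ) < (phiW (typeOf y) (w k)).length := j.isLt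
    have h := letterAt k (j : ℕ) hjlt
    show y (r'.t k - r'.t 0 + ((j : ℕ) : ℤ) + r'.t 0) = (phiW (typeOf y) (w k)).get j
    rw [show r'.t k - r'.t 0 + ((j : ℕ) : ℤ) + r'.t 0 = r'.t k + ((j : ℕ) : ℤ) from by ring]
    exact h.trans (get_eq_getD (phiW (typeOf y) (w k)) j).symm
  · funext n
    rw [shift_iter]
    show y n = y (n + (i0 : ℤ) + r'.t 0)
    congr 1
    omega

lemma key : ∀ L : ℕ, 1 ≤ L → ∀ (τ : ℕ → Bool) (x : ℤ → ℕ), SmoothSeq x → TypesX x = τ →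
    ∃ i : ℕ, i < 3 ^ L ∧ recode x = shift^[i] (substComp τ L (deltaY^[L] (recode x))) := by
  intro L
  induction L with
  | zero => intro h; omega
  | succ L ih =>
    intro _ τ x hx hτ
    obtain ⟨zz, u, i, hi3, hu0, hus, hzs, heq⟩ := main1 hx
    have htypeq : typeOf (recode x) = τ 0 := by rw [← hτ]; rfl
    rw [htypeq] at hus hzs
    rcases Nat.eq_zero_or_pos L with hL0 | hLpos
    · subst hL0
      refine ⟨i, by rw [pow_one]; exact hi3, ?_⟩
      have hsf : substComp τ 1 (deltaY^[1] (recode x)) = zz := by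
        show substF (τ 0) (deltaY (recode x)) = zz
        exact substF_eq ⟨u, hu0, hus, hzs⟩
      rw [hsf]
      exact heq
    · have hx' : SmoothSeq (delta x) := smooth_delta hx
      have hτ' : TypesX (delta x) = fun n => τ (n + 1) := by
        funext n
        show typeOf (recode (delta^[n] (delta x))) = τ (n + 1)
        rw [← Function.iterate_succ_apply]
        rw [← hτ]
        rfl
      obtain ⟨j, hj, hjeq⟩ := ih hLpos (fun n => τ (n + 1)) (delta x) hx' hτ'
      have hdy : recode (delta x) = deltaY (recode x) := (deltaY_recode hx).symm
      rw [hdy] at hjeq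
      set W := substComp (fun n => τ (n + 1)) L (deltaY^[L] (deltaY (recode x))) with hW
      have hWe : (fun n => deltaY (recode x) (n + (-(j : ℤ)))) = W := by
        funext n
        rw [hjeq, shift_iter]
        congr 1
        ring
      have hsubW : IsSubst (τ 0) W (fun n => zz (n + u (-(j : ℤ)))) := by
        rw [← hWe]
        exact isSubst_shiftZ hus hzs (-(j : ℤ))
      have hub := u_neg_bounds hu0 hus j
      set m : ℕ := (-(u (-(j : ℤ)))).toNat with hm
      have hmz : (m : ℤ) = -(u (-(j : ℤ))) := Int.toNat_of_nonneg (by omega)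
      have hzzm : zz = shift^[m] (fun n => zz (n + u (-(j : ℤ)))) := by
        funext n
        rw [shift_iter]
        show zz n = zz (n + (m : ℤ) + u (-(j : ℤ)))
        congr 1
        omega
      refine ⟨i + m, ?_, ?_⟩
      · have h1 : m ≤ 3 * j := by omega
        have h2 : (3 : ℕ) ^ (L + 1) = 3 * 3 ^ L := by rw [pow_succ]; ring
        omega
      · have hcomp : substComp τ (L + 1) (deltaY^[L + 1] (recode x)) = substF (τ 0) W := by
          show substF (τ 0) (substComp (fun n => τ (n + 1)) L (deltaY^[L + 1] (recode x))) =
            substF (τ 0) W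
          rw [Function.iterate_succ_apply, ← hW]
        rw [hcomp, substF_eq hsubW]
        conv_lhs => rw [heq, hzzm]
        exact (Function.iterate_add_apply shift i m _).symm

end Stmt5Aux

/-- Recovering `y` from its `L`-th derivative.
For every `τ`, every `y ∈ Y_τ` and every `L ≥ 1`, there exists `i ∈ {0, ..., 3^L - 1}`
with `y = S^i (φ_{τ₀} ∘ ⋯ ∘ φ_{τ_{L-1}})(Δ^L y)`. -/
theorem stmt5 (τ : ℕ → Bool) (y : ℤ → ABCD) (hy : y ∈ Yset τ) (L : ℕ) (hL : 1 ≤ L) :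
    ∃ i : ℕ, i < 3 ^ L ∧ y = shift^[i] (substComp τ L (deltaY^[L] y)) := by
  obtain ⟨x, hx, rfl⟩ := hy
  exact Stmt5Aux.key L hL τ x hx.1 hx.2
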